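/- arXiv:2312.11589 — 5 statements merged into one kernel-verified Lean document; each statement's English description precedes it below -/
import Mathlib

section
/- Let F_y = (T_y, c_y) be an ethical framework on a finite action set A with |A| ≥ 2, and let k ∈ (0, 1). Let s = max over a ∈ A of |wam(F_y, a)|, and set m = 2s + 1. Enumerate A as a_1, …, a_n. Define ft : A → ℝ by ft(a_i) = (1/k)·i·m, and let F = (T_y ∪ {ft}, c) where c(ft) = k and c(t) = (1−k)·c_y(t) for t ∈ T_y. Then for all i, j: wam(F, a_i) ≤ wam(F, a_j) if and only if i ≤ j. That is, the MEC ordering under F coincides exactly with ft's own ordering of the actions. -/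
open Finset

/-- Core lemma for MEC being Pascalian.  Given any framework
`F_y = (T, c_y)` on actions `a_1, …, a_n` (here `Fin n`), the fanatical theory
`ft(a_i) = (1/k)·i·m` with `m = 2s+1`, `s = max_a |wam(F_y, a)|`, added with
credence `k` (old credences rescaled by `1-k`), makes the MEC ordering of the
extended framework coincide exactly with `ft`'s ordering of the actions. -/
theorem mec_follows_fanatical_theory
    {ι : Type*} (n : ℕ) (hn : 2 ≤ n)
    (T : Finset ι) (hT : T.Nonempty)
    (e : ι → Fin n → ℝ) (cy : ι → ℝ)
    (hpos : ∀ t ∈ T, 0 < cy t) (hle : ∀ t ∈ T, cy t ≤ 1)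
    (hsum : ∑ t ∈ T, cy t = 1)
    (k : ℝ) (hk0 : 0 < k) (hk1 : k < 1)
    (wamy : Fin n → ℝ) (hwamy : ∀ a, wamy a = ∑ t ∈ T, cy t * e t a)
    (s : ℝ) (hs : IsGreatest (Set.range fun a => |wamy a|) s)
    (m : ℝ) (hm : m = 2 * s + 1)
    (ft : Fin n → ℝ) (hft : ∀ i : Fin n, ft i = (1 / k) * ((i : ℕ) + 1) * m)
    (wamF : Fin n → ℝ)
    (hwamF : ∀ a, wamF a = k * ft a + ∑ t ∈ T, (1 - k) * cy t * e t a) :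
    ∀ i j : Fin n, wamF i ≤ wamF j ↔ i ≤ j := by
  have hsnn : 0 ≤ s := by
    obtain ⟨a, ha⟩ := hs.1
    exact ha ▸ abs_nonneg _
  have hbound : ∀ a : Fin n, |wamy a| ≤ s := fun a => hs.2 ⟨a, rfl⟩
  have hF : ∀ a : Fin n, wamF a = ((a : ℕ) + 1) * m + (1 - k) * wamy a := by
    intro a
    rw [hwamF, hft, hwamy, Finset.mul_sum]
    field_simp
  have hmono : ∀ i j : Fin n, i < j → wamF i < wamF j := by
    intro i j hij
    rw [hF, hF]
    have h1 : ((i : ℕ) + 1 : ℝ) + 1 ≤ ((j : ℕ) + 1 : ℝ) := by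
      have : (i : ℕ) + 1 ≤ (j : ℕ) := hij
      exact_mod_cast by omega
    have hm1 : (1 : ℝ) ≤ m := by rw [hm]; linarith
    have hstep : ((i : ℕ) + 1 : ℝ) * m + m ≤ ((j : ℕ) + 1 : ℝ) * m := by
      nlinarith
    have hwi : |wamy i| ≤ s := hbound i
    have hwj : |wamy j| ≤ s := hbound j
    have hwi' := abs_le.mp hwi
    have hwj' := abs_le.mp hwj
    nlinarith [hwi'.1, hwi'.2, hwj'.1, hwj'.2]
  intro i j
  constructor
  · intro h
    by_contra hlt
    push_neg at hlt
    exact absurd h (not_le.mpr (hmono j i hlt))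
  · intro h
    rcases lt_or_eq_of_le h with h | h
    · exact (hmono i j h).le
    · rw [h]
end

section
/- The Highest Median social welfare functional is not k-fanatical for any k ∈ (0, 0.5). Specifically: take A = {a, b}, T_y = {t} with c_y(t) = 1, t(a) = 1, t(b) = 0. For any k ∈ (0, 0.5) and any framework F = (T_y ∪ T_d, c) obtained by extending F_y = (T_y, c_y) with a set of theories T_d of total credence at most k (so c(t) ≥ 1 − k > 1/2), the Highest Median ordering of {a, b} under F equals the Highest Median ordering under F_y (namely b ≺ a). Hence T_d cannot be a dominant subset. -/
open Finset

/-- `v` is a weighted median of action `a`'s evaluations in the framework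
`(T, c)`: at most half of the credence lies on evaluations strictly below `v`,
and at most half on evaluations strictly above `v`. -/
def IsWMedian {ι A : Type*} [DecidableEq ι]
    (T : Finset ι) (c : ι → ℝ) (e : ι → A → ℝ) (a : A) (v : ℝ) : Prop :=
  (∑ t ∈ T.filter (fun t => e t a < v), c t) ≤ 1 / 2 ∧
  (∑ t ∈ T.filter (fun t => v < e t a), c t) ≤ 1 / 2

/-- Highest Median is not `k`-fanatical for any `k ∈ (0, 0.5)`:
with `T_y = {t₀}`, `t₀(a) = 1`, `t₀(b) = 0`, extending by any set `T_d` of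
theories of total credence at most `k` leaves the weighted medians (hence the
Highest Median ordering `b ≺ a`) unchanged, so `T_d` is not dominant. -/
theorem highest_median_not_fanatical
    {ι A : Type*} [DecidableEq ι]
    (k : ℝ) (hk0 : 0 < k) (hk : k < 1 / 2)
    (t0 : ι) (Td : Finset ι) (ht0 : t0 ∉ Td)
    (c : ι → ℝ)
    (hpos : ∀ t ∈ insert t0 Td, 0 < c t)
    (hsum : ∑ t ∈ insert t0 Td, c t = 1)
    (hTd : ∑ t ∈ Td, c t ≤ k)
    (a b : A) (hab : a ≠ b)
    (e : ι → A → ℝ) (hea : e t0 a = 1) (heb : e t0 b = 0) :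
    (∀ v, IsWMedian (insert t0 Td) c e a v ↔ v = 1) ∧
    (∀ v, IsWMedian (insert t0 Td) c e b v ↔ v = 0) ∧
    (∀ va vb, IsWMedian (insert t0 Td) c e a va →
      IsWMedian (insert t0 Td) c e b vb → vb < va) := by
  have ht0pos : 0 < c t0 := hpos t0 (Finset.mem_insert_self _ _)
  have hsum' : c t0 + ∑ t ∈ Td, c t = 1 := by
    rw [← Finset.sum_insert ht0]; exact hsum
  have hct0 : 1 / 2 < c t0 := by linarith
  have main : ∀ (x : A) (w : ℝ), e t0 x = w →
      ∀ v, IsWMedian (insert t0 Td) c e x v ↔ v = w := by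
    intro x w hw v
    constructor
    · rintro ⟨h1, h2⟩
      by_contra hne
      rcases lt_or_gt_of_ne hne with h | h
      · -- v < w = e t0 x, so t0 in second filter
        have hmem : t0 ∈ (insert t0 Td).filter (fun t => v < e t x) := by
          simp [Finset.mem_filter, hw, h]
        have hle : c t0 ≤ ∑ t ∈ (insert t0 Td).filter (fun t => v < e t x), c t :=
          Finset.single_le_sum (fun t ht => (hpos t (Finset.mem_of_mem_filter t ht)).le) hmem
        linarith
      · have hmem : t0 ∈ (insert t0 Td).filter (fun t => e t x < v) := by
          simp [Finset.mem_filter, hw, h]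
        have hle : c t0 ≤ ∑ t ∈ (insert t0 Td).filter (fun t => e t x < v), c t :=
          Finset.single_le_sum (fun t ht => (hpos t (Finset.mem_of_mem_filter t ht)).le) hmem
        linarith
    · rintro rfl
      have hsub : ∀ (p : ι → Prop) [DecidablePred p], ¬ p t0 →
          ∑ t ∈ (insert t0 Td).filter p, c t ≤ 1 / 2 := by
        intro p _ hp
        have hss : (insert t0 Td).filter p ⊆ Td := by
          intro t ht
          rw [Finset.mem_filter, Finset.mem_insert] at ht
          rcases ht.1 with rfl | h
          · exact absurd ht.2 hp
          · exact h
        have := Finset.sum_le_sum_of_subset_of_nonneg hss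
          (fun t ht _ => (hpos t (Finset.mem_insert_of_mem ht)).le)
        linarith
      exact ⟨hsub _ (by simp [hw]), hsub _ (by simp [hw])⟩
  refine ⟨main a 1 hea, main b 0 heb, ?_⟩
  intro va vb hva hvb
  rw [main a 1 hea va] at hva
  rw [main b 0 heb vb] at hvb
  rw [hva, hvb]; norm_num
end

section
/- MEC is Pascalian: for every k ∈ (0, 0.5), every ethical framework F_y = (T_y, c_y), and every finite action set A with |A| ≥ 2, there exists a theory ft and an extended framework F = (T_y ∪ {ft}, c) with c(ft) = k and c(t) = (1−k)c_y(t) for t ∈ T_y, such that {ft} is a dominant subset: the MEC ordering under F equals the MEC ordering under the restriction to {ft} (i.e., ft's own ordering), and this ordering differs from the MEC ordering under F_y. -/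
open Finset

/-- MEC is Pascalian.  For every `k ∈ (0, 0.5)`, every ethical
framework `F_y = (T, c_y)` and every finite action set `A` with `|A| ≥ 2`,
there is a theory `ft` such that in the extended framework (credence `k` for
`ft`, old credences rescaled by `1-k`) the MEC ordering equals `ft`'s own
ordering (i.e. the MEC ordering of the restriction to `{ft}`), and this
ordering differs from the MEC ordering of `F_y`; i.e. `{ft}` is a dominant
subset of total credence `k`. -/
theorem mec_is_pascalian
    {ι A : Type*} [Fintype A] (hA : 2 ≤ Fintype.card A)
    (T : Finset ι) (hT : T.Nonempty)
    (e : ι → A → ℝ) (cy : ι → ℝ)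
    (hpos : ∀ t ∈ T, 0 < cy t) (hle : ∀ t ∈ T, cy t ≤ 1)
    (hsum : ∑ t ∈ T, cy t = 1)
    (k : ℝ) (hk0 : 0 < k) (hk : k < 1 / 2) :
    ∃ ft : A → ℝ,
      (∀ a b : A,
        (k * ft a + ∑ t ∈ T, (1 - k) * cy t * e t a) ≤
          (k * ft b + ∑ t ∈ T, (1 - k) * cy t * e t b) ↔ ft a ≤ ft b) ∧
      ¬ (∀ a b : A,
          ft a ≤ ft b ↔ (∑ t ∈ T, cy t * e t a) ≤ (∑ t ∈ T, cy t * e t b)) := by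
  classical
  set g : A → ℝ := fun a => ∑ t ∈ T, cy t * e t a with hg
  have hA0 : (Finset.univ : Finset A).Nonempty := by
    rw [← Finset.card_pos, Finset.card_univ]; omega
  obtain ⟨x, y, hxy⟩ : ∃ x y : A, x ≠ y :=
    Fintype.exists_pair_of_one_lt_card (by omega)
  obtain ⟨a0, b0, hab, hgab⟩ : ∃ a0 b0 : A, a0 ≠ b0 ∧ g a0 ≤ g b0 := by
    rcases le_total (g x) (g y) with h | h
    · exact ⟨x, y, hxy, h⟩
    · exact ⟨y, x, hxy.symm, h⟩
  set eA := Fintype.equivFin A with heA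
  set σ : Equiv.Perm A :=
    if (eA b0 : ℕ) < (eA a0 : ℕ) then Equiv.refl A else Equiv.swap a0 b0 with hσ
  set idx : A → ℕ := fun a => (eA (σ a) : ℕ) with hidx
  have hidx_inj : Function.Injective idx := fun a b h =>
    σ.injective (eA.injective (Fin.ext h))
  have hidx_ab : idx b0 < idx a0 := by
    by_cases h : (eA b0 : ℕ) < (eA a0 : ℕ)
    · simp only [hidx, hσ, if_pos h, Equiv.refl_apply]; exact h
    · have hne : (eA a0 : ℕ) ≠ (eA b0 : ℕ) := fun hc => hab (eA.injective (Fin.ext hc))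
      have hlt : (eA a0 : ℕ) < (eA b0 : ℕ) := lt_of_le_of_ne (not_lt.mp h) hne
      simp only [hidx, hσ, if_neg h, Equiv.swap_apply_left, Equiv.swap_apply_right]
      exact hlt
  set C : ℝ := Finset.univ.sup' hA0 (fun a => |g a|) with hC
  have hCg : ∀ a, |g a| ≤ C := fun a =>
    Finset.le_sup' (fun z => |g z|) (Finset.mem_univ a)
  have hC0 : 0 ≤ C := le_trans (abs_nonneg _) (hCg a0)
  have hk1 : 0 < 1 - k := by linarith
  set M : ℝ := (2 * (1 - k) * C + 1) / k with hM
  have hM0 : 0 < M := div_pos (by nlinarith) hk0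
  have hkM : k * M = 2 * (1 - k) * C + 1 := by
    rw [hM]; field_simp
  set ft : A → ℝ := fun a => M * (idx a : ℝ) with hft
  have hmono : ∀ a b : A, idx a < idx b → ft a < ft b := by
    intro a b h
    exact mul_lt_mul_of_pos_left (by exact_mod_cast h) hM0
  have hftlt : ∀ a b : A, ft a < ft b → idx a < idx b := by
    intro a b h
    by_contra hc
    exact absurd h (not_lt.mpr (mul_le_mul_of_nonneg_left
      (Nat.cast_le.mpr (not_lt.mp hc)) hM0.le))
  have hsum' : ∀ a, ∑ t ∈ T, (1 - k) * cy t * e t a = (1 - k) * g a := by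
    intro a; rw [hg, Finset.mul_sum]
    exact Finset.sum_congr rfl fun t _ => by ring
  have key : ∀ a b : A, ft a < ft b →
      k * ft a + (1 - k) * g a < k * ft b + (1 - k) * g b := by
    intro a b h
    have hlt : idx a < idx b := hftlt a b h
    have h1 : (idx a : ℝ) + 1 ≤ (idx b : ℝ) := by exact_mod_cast hlt
    have hga := (abs_le.mp (hCg a)).2
    have hgb := (abs_le.mp (hCg b)).1
    have hkMpos : 0 < k * M := by rw [hkM]; nlinarith
    have hdiff : k * M ≤ k * ft b - k * ft a := by
      have : k * M * 1 ≤ k * M * ((idx b : ℝ) - (idx a : ℝ)) :=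
        mul_le_mul_of_nonneg_left (by linarith) hkMpos.le
      simp only [hft]; nlinarith
    have : (1 - k) * g a - (1 - k) * g b ≤ 2 * (1 - k) * C := by nlinarith
    nlinarith [hkM]
  refine ⟨ft, ?_, ?_⟩
  · intro a b
    rw [hsum' a, hsum' b]
    constructor
    · intro h
      by_contra hc
      exact absurd h (not_le.mpr (key b a (not_le.mp hc)))
    · intro h
      rcases eq_or_lt_of_le h with heq | hlt
      · have : (idx a : ℝ) = (idx b : ℝ) := by
          have := mul_left_cancel₀ (ne_of_gt hM0) heq
          exact this
        have : a = b := hidx_inj (by exact_mod_cast this)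
        rw [this]
      · exact (key a b hlt).le
  · intro hall
    have h1 : ft b0 < ft a0 := hmono b0 a0 hidx_ab
    have h2 : ft a0 ≤ ft b0 := (hall a0 b0).mpr hgab
    linarith
end

section
/- Maximin is Pascalian: for every k ∈ (0, 0.5), every ethical framework F_y = (T_y, c_y), and every finite action set A with |A| ≥ 2, there exists a theory ft such that in the framework F = (T_y ∪ {ft}, c) with c(ft) = k, the singleton {ft} is a dominant subset under the Maximin functional: the Maximin ordering under F equals ft's ordering and differs from the Maximin ordering under F_y. -/
open Finset

/-- Maximin is Pascalian.  For every `k ∈ (0, 0.5)`, every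
ethical framework `F_y = (T, c_y)` and every finite action set `A` with
`|A| ≥ 2`, there is a theory `ft` such that in the extended framework
(`ft` with credence `k`, old credences rescaled by `1-k`) the Maximin ordering
equals `ft`'s ordering and differs from the Maximin ordering of `F_y`;
i.e. `{ft}` is a dominant subset of credence `k`. -/
theorem maximin_is_pascalian
    {ι A : Type*} [Fintype A] (hA : 2 ≤ Fintype.card A)
    (T : Finset ι) (hT : T.Nonempty)
    (e : ι → A → ℝ) (cy : ι → ℝ)
    (hpos : ∀ t ∈ T, 0 < cy t) (hsum : ∑ t ∈ T, cy t = 1)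
    (k : ℝ) (hk0 : 0 < k) (hk : k < 1 / 2) :
    ∃ ft : A → ℝ,
      (∀ a b : A,
        min (ft a) (T.inf' hT fun t => e t a) ≤ min (ft b) (T.inf' hT fun t => e t b)
          ↔ ft a ≤ ft b) ∧
      ¬ (∀ a b : A,
          ft a ≤ ft b ↔
            T.inf' hT (fun t => e t a) ≤ T.inf' hT (fun t => e t b)) := by
  classical
  have hAne : Nonempty A := Fintype.card_pos_iff.mp (by omega)
  have huniv : (Finset.univ : Finset A).Nonempty := univ_nonempty
  set m : A → ℝ := fun a => T.inf' hT fun t => e t a with hm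
  set μ : ℝ := Finset.univ.inf' huniv m with hμ
  obtain ⟨astar, -, hmax⟩ := Finset.exists_max_image Finset.univ m huniv
  refine ⟨fun a => if a = astar then μ - 2 else μ - 1, ?_, ?_⟩
  · intro a b
    have hlt : ∀ a : A, (if a = astar then μ - 2 else μ - 1) < m a := by
      intro a
      have h1 : μ ≤ m a := Finset.inf'_le m (mem_univ a)
      split <;> linarith
    rw [min_eq_left (hlt a).le, min_eq_left (hlt b).le]
  · intro h
    obtain ⟨b, hb⟩ := Fintype.exists_ne_of_one_lt_card (by omega) astar
    have h1 := (h b astar).mpr (hmax b (mem_univ b))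
    simp only [hb, if_false, if_true, ite_true, ite_false] at h1
    linarith
end

section
/- For k ∈ (0, 0.5) and k' ∈ (k, 0.5), the k-trimmed Highest Mean is k'-fanatical: in a two-theory framework F' = ({t_x, ft}, c') with c'(ft) = k' > k and c'(t_x) = 1 − k', neither theory is ever trimmed by the k-trimming procedure (since both credences exceed k... in the case c'(t_x) = 1−k' > k and c'(ft) = k' > k), so for every action a, the k-trimmed weighted mean equals the untrimmed weighted mean k'·ft(a) + (1−k')·t_x(a); hence k-thm on F' coincides with MEC on F'. -/
open Finset

/-- Bottom-`k` trimmed set (maximal initial segment of the sorted order `σ`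
with cumulative credence at most `k`). -/
noncomputable def bottomSet (N : ℕ) (k : ℝ) (c : Fin N → ℝ) (σ : Equiv.Perm (Fin N)) :
    Finset (Fin N) :=
  (Finset.univ.filter fun i => (∑ j ∈ Finset.Iic i, c (σ j)) ≤ k).image σ

/-- Top-`k` trimmed set (maximal final segment of total credence at most `k`). -/
noncomputable def topSet (N : ℕ) (k : ℝ) (c : Fin N → ℝ) (σ : Equiv.Perm (Fin N)) :
    Finset (Fin N) :=
  (Finset.univ.filter fun i => (∑ j ∈ Finset.Ici i, c (σ j)) ≤ k).image σ

/-- The `k`-trimmed weighted mean of action `a`. -/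
noncomputable def tmean {A : Type*} (N : ℕ) (k : ℝ) (c : Fin N → ℝ)
    (σ : Equiv.Perm (Fin N)) (e : Fin N → A → ℝ) (a : A) : ℝ :=
  ∑ t ∈ Finset.univ \ (bottomSet N k c σ ∪ topSet N k c σ), c t * e t a

/-- in the two-theory framework `F' = ({t_x, ft}, c')` with
`c'(t_x) = 1 - k' > k` and `c'(ft) = k' > k` (where `k < k' < 0.5`), neither
theory is trimmed by the `k`-trimming procedure, so for every action the
`k`-trimmed mean equals the untrimmed weighted mean
`k'·ft(a) + (1-k')·t_x(a)`; hence `k`-thm coincides with MEC on `F'`.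
(Theory `0` is `t_x`, theory `1` is `ft`.) -/
theorem kthm_eq_mec_on_two_theory_framework
    {A : Type*}
    (e : Fin 2 → A → ℝ) (c : Fin 2 → ℝ)
    (k k' : ℝ) (hk0 : 0 < k) (hkk' : k < k') (hk' : k' < 1 / 2)
    (hc0 : c 0 = 1 - k') (hc1 : c 1 = k')
    (σ : A → Equiv.Perm (Fin 2))
    (hsorted : ∀ a' : A, Monotone fun i => e (σ a' i) a') :
    (∀ a : A, ∀ t : Fin 2,
      t ∉ bottomSet 2 k c (σ a) ∧ t ∉ topSet 2 k c (σ a)) ∧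
    (∀ a : A, tmean 2 k c (σ a) e a = k' * e 1 a + (1 - k') * e 0 a) ∧
    (∀ a b : A,
      tmean 2 k c (σ a) e a ≤ tmean 2 k c (σ b) e b ↔
        (∑ t, c t * e t a) ≤ (∑ t, c t * e t b)) := by
  have hck : ∀ i : Fin 2, k < c i := by
    intro i
    fin_cases i
    · show k < c 0; rw [hc0]; linarith
    · show k < c 1; rw [hc1]; linarith
  have hcpos : ∀ i : Fin 2, 0 < c i := fun i => lt_trans hk0 (hck i)
  have h1 : ∀ a : A, ∀ t : Fin 2,
      t ∉ bottomSet 2 k c (σ a) ∧ t ∉ topSet 2 k c (σ a) := by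
    intro a t
    constructor
    · simp only [bottomSet, Finset.mem_image, Finset.mem_filter, Finset.mem_univ, true_and]
      rintro ⟨i, hi, -⟩
      have : c (σ a i) ≤ ∑ j ∈ Finset.Iic i, c (σ a j) :=
        Finset.single_le_sum (fun j _ => (hcpos _).le) (Finset.mem_Iic.2 le_rfl)
      have := hck (σ a i)
      linarith
    · simp only [topSet, Finset.mem_image, Finset.mem_filter, Finset.mem_univ, true_and]
      rintro ⟨i, hi, -⟩
      have : c (σ a i) ≤ ∑ j ∈ Finset.Ici i, c (σ a j) :=
        Finset.single_le_sum (fun j _ => (hcpos _).le) (Finset.mem_Ici.2 le_rfl)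
      have := hck (σ a i)
      linarith
  have hempty : ∀ a : A,
      Finset.univ \ (bottomSet 2 k c (σ a) ∪ topSet 2 k c (σ a)) = Finset.univ := by
    intro a
    apply Finset.sdiff_eq_self_of_disjoint
    rw [Finset.disjoint_right]
    intro t ht
    rcases Finset.mem_union.1 ht with h | h
    · exact absurd h (h1 a t).1
    · exact absurd h (h1 a t).2
  have h2 : ∀ a : A, tmean 2 k c (σ a) e a = k' * e 1 a + (1 - k') * e 0 a := by
    intro a
    rw [tmean, hempty a, Fin.sum_univ_two, hc0, hc1]
    ring
  refine ⟨h1, h2, fun a b => ?_⟩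
  have hs : ∀ x : A, (∑ t, c t * e t x) = k' * e 1 x + (1 - k') * e 0 x := by
    intro x; rw [Fin.sum_univ_two, hc0, hc1]; ring
  rw [h2 a, h2 b, hs a, hs b]
end
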